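/- Suppose P is a densely defined operator on a Hilbert space, L a bounded operator with ε‖L‖ ≤ 1/2 for some ε > 0, and Re(Pu, (Id + ε(L+L*))u) ≥ c₀‖u‖² for all u in a dense subspace of a closed subspace K. Then for all z ∈ ℂ with Re z ≤ c₀/(2(1+2ε‖L‖)) and all u in that dense subspace, ‖(P - z)u‖ ≥ (c₀/(2(1+2ε‖L‖)))‖u‖. -/

import Mathlib

open scoped InnerProductSpace

/-- Hypocoercive estimate implies resolvent estimate: if
`Re(Pu, (Id + ε(L+L*))u) ≥ c₀‖u‖²` on a dense subspace `S` of a closed subspace `K`, with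
`2ε‖L‖ ≤ 1`, then for `Re z ≤ c₀/(2(1+2ε‖L‖))` one has
`‖(P - z)u‖ ≥ (c₀/(2(1+2ε‖L‖)))‖u‖` for all `u ∈ S`. -/
theorem stmt_16 {H : Type*} [NormedAddCommGroup H] [InnerProductSpace ℂ H] [CompleteSpace H]
    (P : H →ₗ.[ℂ] H) (hdense : Dense (P.domain : Set H))
    (L : H →L[ℂ] H) (ε : ℝ) (hε : 0 < ε) (hεL : 2 * ε * ‖L‖ ≤ 1)
    (c₀ : ℝ) (hc₀ : 0 < c₀)
    (K S : Submodule ℂ H) (hKclosed : IsClosed (K : Set H))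
    (hSP : S ≤ P.domain) (hSK : S ≤ K) (hSdense : closure (S : Set H) = K)
    (hcoer : ∀ (u : H) (hu : u ∈ S),
      c₀ * ‖u‖ ^ 2 ≤
        (inner ℂ (P ⟨u, hSP hu⟩) (u + ε • (L u + ContinuousLinearMap.adjoint L u)) : ℂ).re) :
    ∀ z : ℂ, z.re ≤ c₀ / (2 * (1 + 2 * ε * ‖L‖)) →
      ∀ (u : H) (hu : u ∈ S),
        c₀ / (2 * (1 + 2 * ε * ‖L‖)) * ‖u‖ ≤ ‖P ⟨u, hSP hu⟩ - z • u‖ := by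
  intro z hz u hu
  have hL0 : (0:ℝ) ≤ ‖L‖ := norm_nonneg _
  set M : ℝ := 1 + 2 * ε * ‖L‖ with hM
  have hM0 : (0:ℝ) < M := by positivity
  clear_value M
  set v : H := u + ε • (L u + ContinuousLinearMap.adjoint L u) with hv
  set w : H := (P ⟨u, hSP hu⟩ : H) - z • u with hw
  have hLad : (inner ℂ u (ContinuousLinearMap.adjoint L u) : ℂ)
      = starRingEnd ℂ (inner ℂ u (L u) : ℂ) := by
    rw [ContinuousLinearMap.adjoint_inner_right, ← inner_conj_symm]
  have hiv : (inner ℂ u v : ℂ)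
      = ((‖u‖ ^ 2 : ℝ) : ℂ) + (ε : ℂ) * ((inner ℂ u (L u) : ℂ) + starRingEnd ℂ (inner ℂ u (L u))) := by
    rw [hv, inner_add_right, RCLike.real_smul_eq_coe_smul (K := ℂ), inner_smul_right,
      inner_add_right, hLad, inner_self_eq_norm_sq_to_K]
    norm_cast
  set r : ℝ := (inner ℂ u v : ℂ).re with hr
  have hre : r = ‖u‖ ^ 2 + ε * (2 * (inner ℂ u (L u) : ℂ).re) := by
    rw [hr, hiv]
    simp only [Complex.add_re, Complex.mul_re, Complex.ofReal_re, Complex.ofReal_im,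
      Complex.conj_re, Complex.conj_im, Complex.add_im, Complex.mul_im]
    ring
  have him : (inner ℂ u v : ℂ).im = 0 := by
    rw [hiv]
    simp only [Complex.add_im, Complex.mul_im, Complex.ofReal_re, Complex.ofReal_im,
      Complex.conj_re, Complex.conj_im, Complex.add_re, Complex.mul_re]
    ring
  have hbound : |(inner ℂ u (L u) : ℂ).re| ≤ ‖L‖ * ‖u‖ ^ 2 := by
    calc |(inner ℂ u (L u) : ℂ).re| ≤ ‖(inner ℂ u (L u) : ℂ)‖ := Complex.abs_re_le_norm _
    _ ≤ ‖u‖ * ‖L u‖ := norm_inner_le_norm _ _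
    _ ≤ ‖u‖ * (‖L‖ * ‖u‖) := mul_le_mul_of_nonneg_left (L.le_opNorm u) (norm_nonneg _)
    _ = ‖L‖ * ‖u‖ ^ 2 := by ring
  have hrabs := abs_le.mp hbound
  have hr0 : 0 ≤ r := by nlinarith [sq_nonneg ‖u‖, hε.le]
  have hrM : r ≤ M * ‖u‖ ^ 2 := by nlinarith [hε.le]
  have hadnorm : ‖ContinuousLinearMap.adjoint L‖ = ‖L‖ :=
    LinearIsometryEquiv.norm_map ContinuousLinearMap.adjoint L
  have hvnorm : ‖v‖ ≤ M * ‖u‖ := by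
    have h1 : ‖L u‖ ≤ ‖L‖ * ‖u‖ := L.le_opNorm u
    have h2 : ‖ContinuousLinearMap.adjoint L u‖ ≤ ‖L‖ * ‖u‖ := by
      have := (ContinuousLinearMap.adjoint L).le_opNorm u
      rwa [hadnorm] at this
    calc ‖v‖ ≤ ‖u‖ + ‖ε • (L u + ContinuousLinearMap.adjoint L u)‖ := norm_add_le _ _
    _ = ‖u‖ + |ε| * ‖L u + ContinuousLinearMap.adjoint L u‖ := by rw [norm_smul, Real.norm_eq_abs]
    _ ≤ ‖u‖ + ε * (‖L u‖ + ‖ContinuousLinearMap.adjoint L u‖) := by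
        rw [abs_of_pos hε]
        exact add_le_add_right (mul_le_mul_of_nonneg_left (norm_add_le _ _) hε.le) _
    _ ≤ ‖u‖ + ε * (‖L‖ * ‖u‖ + ‖L‖ * ‖u‖) :=
        add_le_add_right (mul_le_mul_of_nonneg_left (add_le_add h1 h2) hε.le) _
    _ = M * ‖u‖ := by rw [hM]; ring
  have hwv : (inner ℂ w v : ℂ).re = (inner ℂ ((P ⟨u, hSP hu⟩ : H)) v : ℂ).re - z.re * r := by
    rw [hw, inner_sub_left, inner_smul_left, Complex.sub_re, Complex.mul_re]
    simp [him, hr]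
  have hcoer' := hcoer u hu
  have hzr : z.re * r ≤ c₀ / 2 * ‖u‖ ^ 2 := by
    have h1 : z.re * r ≤ c₀ / (2 * M) * r := mul_le_mul_of_nonneg_right hz hr0
    have h2 : c₀ / (2 * M) * r ≤ c₀ / (2 * M) * (M * ‖u‖ ^ 2) :=
      mul_le_mul_of_nonneg_left hrM (by positivity)
    have h3 : c₀ / (2 * M) * (M * ‖u‖ ^ 2) = c₀ / 2 * ‖u‖ ^ 2 := by
      field_simp
    linarith
  have hkey : c₀ / 2 * ‖u‖ ^ 2 ≤ ‖w‖ * (M * ‖u‖) := by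
    have hCS : (inner ℂ w v : ℂ).re ≤ ‖w‖ * ‖v‖ := by
      calc (inner ℂ w v : ℂ).re ≤ |(inner ℂ w v : ℂ).re| := le_abs_self _
      _ ≤ ‖(inner ℂ w v : ℂ)‖ := Complex.abs_re_le_norm _
      _ ≤ ‖w‖ * ‖v‖ := norm_inner_le_norm _ _
    have h5 : c₀ / 2 * ‖u‖ ^ 2 ≤ (inner ℂ w v : ℂ).re := by
      rw [hwv]; linarith
    have h4 : ‖w‖ * ‖v‖ ≤ ‖w‖ * (M * ‖u‖) :=
      mul_le_mul_of_nonneg_left hvnorm (norm_nonneg _)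
    exact h5.trans (hCS.trans h4)
  by_cases hu0 : u = 0
  · simp [hu0]
  · have hun : 0 < ‖u‖ := norm_pos_iff.mpr hu0
    have h6 : c₀ / 2 * ‖u‖ ≤ ‖w‖ * M :=
      le_of_mul_le_mul_right (by nlinarith [hkey]) hun
    rw [div_mul_eq_mul_div, div_le_iff₀ (by positivity)]
    linarith [h6]
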